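/- Let M be an abelian group, and let f, p : M → M be additive endomorphisms. Let N ⊆ M be a subgroup with f(N) ⊆ N and such that p(x) = x for all x ∈ N. If (f ∘ p - p)^{∘ K} = 0 as an endomorphism of M for some K ≥ 1, then the restriction of f to N is a bijection N → N. -/

import Mathlib

/-- If `p` is the identity on an `f`-invariant subgroup `N` and `(f∘p - p)^K = 0`
for some `K ≥ 1`, then `f` restricts to a bijection of `N`. -/
theorem stmt_5 {M : Type*} [AddCommGroup M] (f p : AddMonoid.End M)
    (N : AddSubgroup M) (hfN : ∀ x ∈ N, f x ∈ N) (hp : ∀ x ∈ N, p x = x)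
    (K : ℕ) (hK : 1 ≤ K) (h : (f * p - p) ^ K = 0) :
    Set.BijOn f (N : Set M) (N : Set M) := by
  set F : AddMonoid.End N :=
    ((f.comp N.subtype).codRestrict N (fun x => hfN x x.2)) with hF
  have hFcoe : ∀ x : N, (F x : M) = f (x : M) := fun x => rfl
  -- key: (F - 1)^k agrees with (f*p - p)^k on N
  have key : ∀ (k : ℕ) (x : N), (((F - 1) ^ k) x : M) = ((f * p - p) ^ k) (x : M) := by
    intro k
    induction k with
    | zero => intro x; simp
    | succ n ih =>
      intro x
      have h1 : ((F - 1) ^ (n + 1)) x = (F - 1) (((F - 1) ^ n) x) := by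
        rw [pow_succ']; rfl
      rw [h1]
      set y : N := ((F - 1) ^ n) x with hy
      have hyM : (y : M) = ((f * p - p) ^ n) (x : M) := ih x
      have h2 : ((F - 1) y : M) = f (y : M) - (y : M) := rfl
      have h3 : ((f * p - p) ^ (n + 1)) (x : M) = (f * p - p) (((f * p - p) ^ n) (x : M)) := by
        rw [pow_succ']; rfl
      rw [h2, h3, ← hyM]
      have : (f * p - p) (y : M) = f (p (y : M)) - p (y : M) := rfl
      rw [this, hp _ y.2]
  have hnil : IsNilpotent (F - 1) := by
    refine ⟨K, ?_⟩
    apply AddMonoidHom.ext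
    intro x
    have := key K x
    rw [h] at this
    exact Subtype.ext (this.trans rfl)
  have hunit : IsUnit F := by
    have := hnil.isUnit_one_add
    simpa using this
  obtain ⟨u, hu⟩ := hunit
  have hbij : Function.Bijective F := by
    constructor
    · intro a b hab
      have h2 : (↑u⁻¹ * F) a = (↑u⁻¹ * F) b := by
        show (↑u⁻¹ : AddMonoid.End N) (F a) = (↑u⁻¹ : AddMonoid.End N) (F b)
        rw [hab]
      rw [← hu, u.inv_mul] at h2
      exact h2
    · intro b
      refine ⟨(↑u⁻¹ : AddMonoid.End N) b, ?_⟩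
      have h2 : (F * ↑u⁻¹) b = b := by rw [← hu, u.mul_inv]; rfl
      exact h2
  refine ⟨fun x hx => hfN x hx, ?_, ?_⟩
  · intro a ha b hb hab
    have : F ⟨a, ha⟩ = F ⟨b, hb⟩ := Subtype.ext (by simpa [hFcoe] using hab)
    exact congrArg Subtype.val (hbij.1 this)
  · intro b hb
    obtain ⟨a, ha⟩ := hbij.2 ⟨b, hb⟩
    exact ⟨a, a.2, congrArg Subtype.val ha⟩
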